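/- Let p,q∈(1,∞) with 1/p + 1/q = 1 and let β∈(0,1]. For any f∈L_p(0,∞) and any measurable g with ‖g‖_{L_q^{0,β}} = (∫₀^∞ |g(v)|^q K₀(βv) dv)^{1/q} < ∞, the convolution (f⋆g)(x) is well-defined for every x>0 and satisfies the uniform bound |(f⋆g)(x)| ≤ 2^{1/q}·‖f‖_{L_p(0,∞)}·‖g‖_{L_q^{0,β}} for all x>0; in particular ‖f⋆g‖_{L_∞(0,∞)} ≤ 2^{1/q}·‖f‖_{L_p(0,∞)}·‖g‖_{L_q^{0,β}}. -/

import Mathlib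

open MeasureTheory Real Set
open scoped ENNReal

/-- The kernel function φ(x,u,v). -/
noncomputable def phiKer (x u v : ℝ) : ℝ :=
  Real.exp (-v * Real.cosh (x + u - 1)) + Real.exp (-v * Real.cosh (x - u + 1))
    - Real.exp (-v * Real.cosh (x + u + 1)) - Real.exp (-v * Real.cosh (x - u - 1))

/-- The modified Bessel function of the second kind of order zero. -/
noncomputable def K0 (v : ℝ) : ℝ := ∫ t in Set.Ioi (0 : ℝ), Real.exp (-v * Real.cosh t)

/-- The trigonometric-weighted generalized convolution (f ⋆ g). -/
noncomputable def gconv (f g : ℝ → ℝ) (x : ℝ) : ℝ :=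
  (1 / 4) * ∫ v in Set.Ioi (0 : ℝ), ∫ u in Set.Ioi (0 : ℝ), phiKer x u v * f u * g v

/-- Fourier cosine transform. -/
noncomputable def Fc (f : ℝ → ℝ) (y : ℝ) : ℝ :=
  Real.sqrt (2 / Real.pi) * ∫ x in Set.Ioi (0 : ℝ), f x * Real.cos (x * y)

/-- Fourier sine transform. -/
noncomputable def Fs (f : ℝ → ℝ) (y : ℝ) : ℝ :=
  Real.sqrt (2 / Real.pi) * ∫ x in Set.Ioi (0 : ℝ), f x * Real.sin (x * y)

/-- Modified Bessel function K_{iy}(x). -/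
noncomputable def Kiy (y x : ℝ) : ℝ :=
  ∫ u in Set.Ioi (0 : ℝ), Real.exp (-x * Real.cosh u) * Real.cos (y * u)

/-- Kontorovich–Lebedev transform. -/
noncomputable def KL (g : ℝ → ℝ) (y : ℝ) : ℝ := ∫ x in Set.Ioi (0 : ℝ), Kiy y x * g x

/-- Fourier cosine convolution. -/
noncomputable def fcConv (f g : ℝ → ℝ) (x : ℝ) : ℝ :=
  (1 / Real.sqrt (2 * Real.pi)) * ∫ u in Set.Ioi (0 : ℝ), f u * (g |x - u| + g (x + u))

/-- Fourier sine–cosine generalized convolution. -/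
noncomputable def fscConv (f g : ℝ → ℝ) (x : ℝ) : ℝ :=
  (1 / Real.sqrt (2 * Real.pi)) * ∫ u in Set.Ioi (0 : ℝ), f u * (g |x - u| - g (x + u))


section aux
open ENNReal

private lemma self_le_cosh (t : ℝ) : t ≤ Real.cosh t := by
  rcases le_or_gt t 0 with h | h
  · linarith [Real.cosh_pos t]
  · have h1 : t ≤ Real.exp (t - 1) := by linarith [Real.add_one_le_exp (t - 1)]
    have h2 : Real.exp t = Real.exp 1 * Real.exp (t - 1) := by
      rw [← Real.exp_add]; ring_nf
    have h3 : (2 : ℝ) ≤ Real.exp 1 := by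
      linarith [Real.exp_one_gt_d9]
    have h4 : (0:ℝ) < Real.exp (t - 1) := Real.exp_pos _
    have h5 : (0:ℝ) < Real.exp (-t) := Real.exp_pos _
    rw [Real.cosh_eq]; nlinarith

private lemma integrableOn_exp_cosh {c : ℝ} (hc : 0 < c) :
    IntegrableOn (fun t => Real.exp (-c * Real.cosh t)) (Ioi (0:ℝ)) := by
  refine (exp_neg_integrableOn_Ioi 0 hc).mono' ?_ ?_
  · exact (Real.continuous_exp.comp
      ((continuous_const.mul Real.continuous_cosh))).aestronglyMeasurable
  · filter_upwards with t
    rw [Real.norm_eq_abs, abs_of_pos (Real.exp_pos _)]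
    exact Real.exp_le_exp.2 (by nlinarith [self_le_cosh t])

private lemma K0_nonneg (c : ℝ) : 0 ≤ K0 c :=
  integral_nonneg fun t => (Real.exp_pos _).le

private lemma meas_exp_cosh (c : ℝ) :
    Measurable fun t : ℝ => ENNReal.ofReal (Real.exp (-c * Real.cosh t)) :=
  ENNReal.measurable_ofReal.comp (Real.continuous_exp.comp
    (continuous_const.mul Real.continuous_cosh)).measurable

private lemma lintegral_exp_cosh_line {c : ℝ} (hc : 0 < c) :
    (∫⁻ t : ℝ, ENNReal.ofReal (Real.exp (-c * Real.cosh t)))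
      = 2 * ENNReal.ofReal (K0 c) := by
  have hmeas := meas_exp_cosh c
  have hIoi : (∫⁻ t in Ioi (0:ℝ), ENNReal.ofReal (Real.exp (-c * Real.cosh t)))
      = ENNReal.ofReal (K0 c) := by
    rw [K0, ← ofReal_integral_eq_lintegral_ofReal (integrableOn_exp_cosh hc)
      (ae_of_all _ fun t => (Real.exp_pos _).le)]
  have hIic : (∫⁻ t in Iic (0:ℝ), ENNReal.ofReal (Real.exp (-c * Real.cosh t)))
      = ENNReal.ofReal (K0 c) := by
    have hmp : MeasurePreserving (fun x : ℝ => -x)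
        (volume : Measure ℝ) volume := Measure.measurePreserving_neg _
    have h2 := hmp.setLIntegral_comp_preimage (measurableSet_Iic (a := (0:ℝ))) hmeas
    rw [show (fun x : ℝ => -x) ⁻¹' Iic 0 = Ici 0 by ext x; simp] at h2
    simp_rw [Real.cosh_neg] at h2
    rw [← h2, ← hIoi]
    exact (setLIntegral_congr Ioi_ae_eq_Ici).symm
  rw [← lintegral_add_compl _ (measurableSet_Iic (a := (0:ℝ))), compl_Iic, hIic,
    setLIntegral_congr Ioi_ae_eq_Ici, ← hIoi, setLIntegral_congr Ioi_ae_eq_Ici, two_mul]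

end aux

section aux2
open ENNReal

private lemma lintegral_term_u_le {v β : ℝ} (hv : 0 < v) (hβ0 : 0 < β) (hβ1 : β ≤ 1)
    (a : ℝ) {ε : ℝ} (hε : ε = 1 ∨ ε = -1) :
    (∫⁻ u in Ioi (0:ℝ), ENNReal.ofReal (Real.exp (-v * Real.cosh (a + ε * u))))
      ≤ 2 * ENNReal.ofReal (K0 (β * v)) := by
  have hbv : 0 < β * v := mul_pos hβ0 hv
  have hmeas := meas_exp_cosh (β * v)
  have step1 : (∫⁻ u in Ioi (0:ℝ), ENNReal.ofReal (Real.exp (-v * Real.cosh (a + ε * u))))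
      ≤ ∫⁻ u in Ioi (0:ℝ), ENNReal.ofReal (Real.exp (-(β * v) * Real.cosh (a + ε * u))) := by
    refine setLIntegral_mono' measurableSet_Ioi fun u _ => ?_
    refine ENNReal.ofReal_le_ofReal (Real.exp_le_exp.2 ?_)
    have hch : (0:ℝ) < Real.cosh (a + ε * u) := Real.cosh_pos _
    nlinarith [mul_nonneg (mul_nonneg (sub_nonneg.2 hβ1) hv.le) hch.le]
  have step2 : (∫⁻ u in Ioi (0:ℝ), ENNReal.ofReal (Real.exp (-(β * v) * Real.cosh (a + ε * u))))
      ≤ ∫⁻ u : ℝ, ENNReal.ofReal (Real.exp (-(β * v) * Real.cosh (a + ε * u))) :=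
    setLIntegral_le_lintegral _ _
  have step3 : (∫⁻ u : ℝ, ENNReal.ofReal (Real.exp (-(β * v) * Real.cosh (a + ε * u))))
      = ∫⁻ t : ℝ, ENNReal.ofReal (Real.exp (-(β * v) * Real.cosh t)) := by
    rcases hε with hε | hε
    · subst hε
      simp_rw [one_mul]
      exact (measurePreserving_add_left (volume : Measure ℝ) a).lintegral_comp hmeas
    · subst hε
      have hneg : (∫⁻ u : ℝ, ENNReal.ofReal (Real.exp (-(β * v) * Real.cosh (a + -1 * u))))
          = ∫⁻ u : ℝ, ENNReal.ofReal (Real.exp (-(β * v) * Real.cosh (a + u))) := by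
        have := (Measure.measurePreserving_neg (volume : Measure ℝ)).lintegral_comp
          (f := fun u => ENNReal.ofReal (Real.exp (-(β * v) * Real.cosh (a + u))))
          (hmeas.comp (continuous_const.add continuous_id).measurable)
        simpa using this
      rw [hneg]
      exact (measurePreserving_add_left (volume : Measure ℝ) a).lintegral_comp hmeas
  calc _ ≤ _ := step1.trans step2
  _ = _ := step3
  _ = 2 * ENNReal.ofReal (K0 (β * v)) := lintegral_exp_cosh_line hbv

private lemma lintegral_term_v_le (a : ℝ) :
    (∫⁻ v in Ioi (0:ℝ), ENNReal.ofReal (Real.exp (-v * Real.cosh a))) ≤ 1 := by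
  have h1 : (∫⁻ v in Ioi (0:ℝ), ENNReal.ofReal (Real.exp (-v * Real.cosh a)))
      ≤ ∫⁻ v in Ioi (0:ℝ), ENNReal.ofReal (Real.exp (-v)) := by
    refine setLIntegral_mono' measurableSet_Ioi fun v hv => ?_
    refine ENNReal.ofReal_le_ofReal (Real.exp_le_exp.2 ?_)
    have := Real.one_le_cosh a
    have hv' : (0:ℝ) < v := hv
    nlinarith
  have h2 : (∫⁻ v in Ioi (0:ℝ), ENNReal.ofReal (Real.exp (-v))) = 1 := by
    have hint : IntegrableOn (fun v : ℝ => Real.exp (-v)) (Ioi 0) := by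
      simpa using exp_neg_integrableOn_Ioi 0 one_pos
    rw [← ofReal_integral_eq_lintegral_ofReal hint (ae_of_all _ fun v => (Real.exp_pos _).le),
      integral_exp_neg_Ioi_zero, ENNReal.ofReal_one]
  exact h1.trans h2.le
end aux2


section aux3
open ENNReal

private noncomputable def Phi (x u v : ℝ) : ℝ :=
  Real.exp (-v * Real.cosh (x + u - 1)) + Real.exp (-v * Real.cosh (x - u + 1))
    + Real.exp (-v * Real.cosh (x + u + 1)) + Real.exp (-v * Real.cosh (x - u - 1))

private lemma abs_phiKer_le (x u v : ℝ) : |phiKer x u v| ≤ Phi x u v := by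
  have h1 := Real.exp_pos (-v * Real.cosh (x + u - 1))
  have h2 := Real.exp_pos (-v * Real.cosh (x - u + 1))
  have h3 := Real.exp_pos (-v * Real.cosh (x + u + 1))
  have h4 := Real.exp_pos (-v * Real.cosh (x - u - 1))
  rw [phiKer, Phi, abs_le]
  constructor <;> nlinarith

private lemma Phi_nonneg (x u v : ℝ) : 0 ≤ Phi x u v :=
  (abs_nonneg _).trans (abs_phiKer_le x u v)

private lemma Phi_cont (x : ℝ) : Continuous fun w : ℝ × ℝ => Phi x w.1 w.2 := by
  unfold Phi; fun_prop

private lemma Phi_meas_right (x u : ℝ) :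
    Measurable fun v : ℝ => ENNReal.ofReal (Phi x u v) := by
  unfold Phi; fun_prop

private lemma Phi_meas_left (x v : ℝ) :
    Measurable fun u : ℝ => ENNReal.ofReal (Phi x u v) := by
  unfold Phi; fun_prop

private lemma ofReal_Phi (x u v : ℝ) :
    ENNReal.ofReal (Phi x u v)
      = ENNReal.ofReal (Real.exp (-v * Real.cosh (x + u - 1)))
        + ENNReal.ofReal (Real.exp (-v * Real.cosh (x - u + 1)))
        + ENNReal.ofReal (Real.exp (-v * Real.cosh (x + u + 1)))
        + ENNReal.ofReal (Real.exp (-v * Real.cosh (x - u - 1))) := by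
  rw [Phi, ENNReal.ofReal_add (by positivity) (Real.exp_pos _).le,
    ENNReal.ofReal_add (by positivity) (Real.exp_pos _).le,
    ENNReal.ofReal_add (Real.exp_pos _).le (Real.exp_pos _).le]

private lemma lintegral_Phi_u {v β : ℝ} (hv : 0 < v) (hβ0 : 0 < β) (hβ1 : β ≤ 1) (x : ℝ) :
    (∫⁻ u in Ioi (0:ℝ), ENNReal.ofReal (Phi x u v)) ≤ ENNReal.ofReal (8 * K0 (β * v)) := by
  have m : ∀ a b : ℝ, Measurable fun u : ℝ =>
      ENNReal.ofReal (Real.exp (-v * Real.cosh (a + b * u))) := fun a b =>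
    (meas_exp_cosh v).comp (by fun_prop)
  have e1 : ∀ u : ℝ, x + u - 1 = (x - 1) + 1 * u := fun u => by ring
  have e2 : ∀ u : ℝ, x - u + 1 = (x + 1) + (-1) * u := fun u => by ring
  have e3 : ∀ u : ℝ, x + u + 1 = (x + 1) + 1 * u := fun u => by ring
  have e4 : ∀ u : ℝ, x - u - 1 = (x - 1) + (-1) * u := fun u => by ring
  simp_rw [ofReal_Phi, e1, e2, e3, e4]
  rw [lintegral_add_right _ (m _ _), lintegral_add_right _ (m _ _),
    lintegral_add_right _ (m _ _)]
  have t1 := lintegral_term_u_le hv hβ0 hβ1 (x - 1) (Or.inl rfl)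
  have t2 := lintegral_term_u_le hv hβ0 hβ1 (x + 1) (Or.inr rfl)
  have t3 := lintegral_term_u_le hv hβ0 hβ1 (x + 1) (Or.inl rfl)
  have t4 := lintegral_term_u_le hv hβ0 hβ1 (x - 1) (Or.inr rfl)
  have h8 : ENNReal.ofReal (8 * K0 (β * v)) = 8 * ENNReal.ofReal (K0 (β * v)) := by
    rw [ENNReal.ofReal_mul (by norm_num : (0:ℝ) ≤ 8)]
    norm_num
  rw [h8]
  calc _ ≤ 2 * ENNReal.ofReal (K0 (β * v)) + 2 * ENNReal.ofReal (K0 (β * v))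
      + 2 * ENNReal.ofReal (K0 (β * v)) + 2 * ENNReal.ofReal (K0 (β * v)) := by
        gcongr <;> assumption
  _ = 8 * ENNReal.ofReal (K0 (β * v)) := by ring

private lemma lintegral_Phi_v (x u : ℝ) :
    (∫⁻ v in Ioi (0:ℝ), ENNReal.ofReal (Phi x u v)) ≤ 4 := by
  have m : ∀ a : ℝ, Measurable fun v : ℝ =>
      ENNReal.ofReal (Real.exp (-v * Real.cosh a)) := fun a => by fun_prop
  simp_rw [ofReal_Phi]
  rw [lintegral_add_right _ (m _), lintegral_add_right _ (m _), lintegral_add_right _ (m _)]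
  calc _ ≤ (1:ℝ≥0∞) + 1 + 1 + 1 := by
        gcongr <;> exact lintegral_term_v_le _
  _ = 4 := by norm_num
end aux3


theorem gconv_Linfty_bound (p q β : ℝ) (hp : 1 < p) (hq : 1 < q)
    (hpq : 1 / p + 1 / q = 1) (hβ : β ∈ Set.Ioc (0 : ℝ) 1)
    (f g : ℝ → ℝ)
    (hf : MeasureTheory.MemLp f (ENNReal.ofReal p)
      (MeasureTheory.volume.restrict (Set.Ioi 0)))
    (hg : Measurable g)
    (hgK : MeasureTheory.IntegrableOn (fun v => |g v| ^ q * K0 (β * v)) (Set.Ioi 0)) :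
    (∀ x ∈ Set.Ioi (0 : ℝ),
      MeasureTheory.IntegrableOn (fun w : ℝ × ℝ => phiKer x w.1 w.2 * f w.1 * g w.2)
        (Set.Ioi 0 ×ˢ Set.Ioi 0) ∧
      |gconv f g x| ≤ 2 ^ (1 / q) * (∫ t in Set.Ioi (0 : ℝ), |f t| ^ p) ^ (1 / p) *
        (∫ v in Set.Ioi (0 : ℝ), |g v| ^ q * K0 (β * v)) ^ (1 / q)) ∧
    MeasureTheory.eLpNorm (gconv f g) ⊤ (MeasureTheory.volume.restrict (Set.Ioi 0)) ≤
      ENNReal.ofReal (2 ^ (1 / q) * (∫ t in Set.Ioi (0 : ℝ), |f t| ^ p) ^ (1 / p) *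
        (∫ v in Set.Ioi (0 : ℝ), |g v| ^ q * K0 (β * v)) ^ (1 / q)) := by
  have hp0 : (0:ℝ) < p := lt_trans one_pos hp
  have hq0 : (0:ℝ) < q := lt_trans one_pos hq
  set μ : Measure ℝ := volume.restrict (Set.Ioi 0) with hμ
  set A : ℝ := ∫ t in Set.Ioi (0:ℝ), |f t| ^ p with hA
  set B : ℝ := ∫ v in Set.Ioi (0:ℝ), |g v| ^ q * K0 (β * v) with hB
  have hA0 : 0 ≤ A := integral_nonneg fun t => Real.rpow_nonneg (abs_nonneg _) _
  have hB0 : 0 ≤ B := integral_nonneg fun v =>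
    mul_nonneg (Real.rpow_nonneg (abs_nonneg _) _) (K0_nonneg _)
  set C : ℝ := 2 ^ (1/q) * A ^ (1/p) * B ^ (1/q) with hC
  -- Integrability of |f|^p
  have hfA : Integrable (fun t => |f t| ^ p) μ := by
    have := hf.integrable_norm_rpow (ENNReal.ofReal_pos.2 hp0).ne'
      ENNReal.ofReal_ne_top
    simpa [ENNReal.toReal_ofReal hp0.le, Real.norm_eq_abs] using this
  have hAeq : (∫⁻ t, ENNReal.ofReal (|f t| ^ p) ∂μ) = ENNReal.ofReal A :=
    (ofReal_integral_eq_lintegral_ofReal hfA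
      (ae_of_all _ fun t => Real.rpow_nonneg (abs_nonneg _) _)).symm
  -- main per-x claim
  have key : ∀ x : ℝ, Integrable (fun w : ℝ × ℝ => phiKer x w.1 w.2 * f w.1 * g w.2)
      (μ.prod μ) ∧ |gconv f g x| ≤ C := by
    intro x
    set H : ℝ × ℝ → ℝ := fun w => phiKer x w.1 w.2 * f w.1 * g w.2 with hH
    have hphic : Continuous fun w : ℝ × ℝ => phiKer x w.1 w.2 := by
      unfold phiKer; fun_prop
    have hHsm : AEStronglyMeasurable H (μ.prod μ) :=
      (hphic.aestronglyMeasurable.mul hf.1.comp_fst).mul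
        ((hg.comp measurable_snd).aestronglyMeasurable)
    have hΦm : Measurable fun w : ℝ × ℝ => ENNReal.ofReal (Phi x w.1 w.2) :=
      ENNReal.measurable_ofReal.comp (Phi_cont x).measurable
    have hrp : ∀ r : ℝ, Measurable fun t : ℝ => ENNReal.ofReal (|t| ^ r) := fun r => by
      fun_prop
    have hfm : AEMeasurable (fun w : ℝ × ℝ => ENNReal.ofReal (|f w.1| ^ p)) (μ.prod μ) :=
      (hrp p).comp_aemeasurable hf.1.comp_fst.aemeasurable
    have hgm : Measurable fun w : ℝ × ℝ => ENNReal.ofReal (|g w.2| ^ q) :=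
      (hrp q).comp (hg.comp measurable_snd)
    -- Tonelli bounds
    have hP : (∫⁻ w, ENNReal.ofReal (Phi x w.1 w.2) * ENNReal.ofReal (|f w.1| ^ p)
        ∂(μ.prod μ)) ≤ 4 * ENNReal.ofReal A := by
      rw [lintegral_prod (fun w : ℝ × ℝ => ENNReal.ofReal (Phi x w.1 w.2) * ENNReal.ofReal (|f w.1| ^ p)) (hΦm.aemeasurable.mul hfm)]
      have step : (∫⁻ u, ∫⁻ v, ENNReal.ofReal (Phi x u v) * ENNReal.ofReal (|f u| ^ p) ∂μ ∂μ)
          ≤ ∫⁻ u, 4 * ENNReal.ofReal (|f u| ^ p) ∂μ := by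
        refine lintegral_mono fun u => ?_
        rw [lintegral_mul_const'' _ (Phi_meas_right x u).aemeasurable]
        exact mul_le_mul_left (lintegral_Phi_v x u) _
      refine step.trans ?_
      have hfu : AEMeasurable (fun u => ENNReal.ofReal (|f u| ^ p)) μ :=
        (hrp p).comp_aemeasurable hf.1.aemeasurable
      rw [lintegral_const_mul'' _ hfu, hAeq]
    have hQ : (∫⁻ w, ENNReal.ofReal (Phi x w.1 w.2) * ENNReal.ofReal (|g w.2| ^ q)
        ∂(μ.prod μ)) ≤ ENNReal.ofReal (8 * B) := by
      rw [lintegral_prod_symm (fun w : ℝ × ℝ => ENNReal.ofReal (Phi x w.1 w.2) * ENNReal.ofReal (|g w.2| ^ q)) (hΦm.aemeasurable.mul hgm.aemeasurable)]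
      have step : (∫⁻ v, ∫⁻ u, ENNReal.ofReal (Phi x u v) * ENNReal.ofReal (|g v| ^ q) ∂μ ∂μ)
          ≤ ∫⁻ v in Set.Ioi (0:ℝ), ENNReal.ofReal (8 * K0 (β * v))
              * ENNReal.ofReal (|g v| ^ q) := by
        refine setLIntegral_mono' measurableSet_Ioi fun v hv => ?_
        rw [lintegral_mul_const'' _ (Phi_meas_left x v).aemeasurable]
        exact mul_le_mul_left (lintegral_Phi_u hv hβ.1 hβ.2 x) _
      refine step.trans ?_
      have e : (∫⁻ v in Set.Ioi (0:ℝ), ENNReal.ofReal (8 * K0 (β * v))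
            * ENNReal.ofReal (|g v| ^ q))
          = ∫⁻ v in Set.Ioi (0:ℝ), ENNReal.ofReal (8 * (|g v| ^ q * K0 (β * v))) := by
        refine lintegral_congr fun v => ?_
        rw [← ENNReal.ofReal_mul (mul_nonneg (by norm_num) (K0_nonneg _))]
        ring_nf
      rw [e, ← ofReal_integral_eq_lintegral_ofReal (hgK.const_mul 8)
        (ae_of_all _ fun v => mul_nonneg (by norm_num)
          (mul_nonneg (Real.rpow_nonneg (abs_nonneg _) _) (K0_nonneg _))),
        integral_const_mul]
    -- Hölder
    set F : ℝ × ℝ → ℝ≥0∞ := fun w =>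
      ENNReal.ofReal (Phi x w.1 w.2) ^ (1/p) * ENNReal.ofReal |f w.1| with hF
    set G : ℝ × ℝ → ℝ≥0∞ := fun w =>
      ENNReal.ofReal (Phi x w.1 w.2) ^ (1/q) * ENNReal.ofReal |g w.2| with hG
    have habs : Measurable fun t : ℝ => ENNReal.ofReal |t| := by fun_prop
    have hFmeas : AEMeasurable F (μ.prod μ) :=
      (hΦm.pow_const _).aemeasurable.mul
        (habs.comp_aemeasurable hf.1.comp_fst.aemeasurable)
    have hGmeas : AEMeasurable G (μ.prod μ) :=
      ((hΦm.pow_const _).mul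
        (ENNReal.measurable_ofReal.comp ((hg.comp measurable_snd).abs))).aemeasurable
    have hFp : ∀ w, F w ^ p = ENNReal.ofReal (Phi x w.1 w.2)
        * ENNReal.ofReal (|f w.1| ^ p) := by
      intro w
      rw [hF, ENNReal.mul_rpow_of_nonneg _ _ hp0.le, ← ENNReal.rpow_mul,
        one_div_mul_cancel hp0.ne', ENNReal.rpow_one,
        ENNReal.ofReal_rpow_of_nonneg (abs_nonneg _) hp0.le]
    have hGq : ∀ w, G w ^ q = ENNReal.ofReal (Phi x w.1 w.2)
        * ENNReal.ofReal (|g w.2| ^ q) := by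
      intro w
      rw [hG, ENNReal.mul_rpow_of_nonneg _ _ hq0.le, ← ENNReal.rpow_mul,
        one_div_mul_cancel hq0.ne', ENNReal.rpow_one,
        ENNReal.ofReal_rpow_of_nonneg (abs_nonneg _) hq0.le]
    have hFG : ∀ w, F w * G w = ENNReal.ofReal (Phi x w.1 w.2)
        * (ENNReal.ofReal |f w.1| * ENNReal.ofReal |g w.2|) := by
      intro w
      rw [hF, hG]
      have : ENNReal.ofReal (Phi x w.1 w.2) ^ (1/p)
          * ENNReal.ofReal (Phi x w.1 w.2) ^ (1/q) = ENNReal.ofReal (Phi x w.1 w.2) := by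
        rw [← ENNReal.rpow_add_of_nonneg _ _ (by positivity) (by positivity), hpq,
          ENNReal.rpow_one]
      calc (ENNReal.ofReal (Phi x w.1 w.2) ^ (1/p) * ENNReal.ofReal |f w.1|)
            * (ENNReal.ofReal (Phi x w.1 w.2) ^ (1/q) * ENNReal.ofReal |g w.2|)
          = (ENNReal.ofReal (Phi x w.1 w.2) ^ (1/p)
              * ENNReal.ofReal (Phi x w.1 w.2) ^ (1/q))
            * (ENNReal.ofReal |f w.1| * ENNReal.ofReal |g w.2|) := by ring
        _ = _ := by rw [this]
    have key1 : (∫⁻ w, ENNReal.ofReal ‖H w‖ ∂(μ.prod μ))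
        ≤ ENNReal.ofReal ((4*A) ^ (1/p) * (8*B) ^ (1/q)) := by
      have h1 : ∀ w, ENNReal.ofReal ‖H w‖ ≤ F w * G w := by
        intro w
        rw [hFG w, Real.norm_eq_abs, hH]
        calc ENNReal.ofReal |phiKer x w.1 w.2 * f w.1 * g w.2|
            ≤ ENNReal.ofReal (Phi x w.1 w.2 * |f w.1| * |g w.2|) := by
              refine ENNReal.ofReal_le_ofReal ?_
              rw [abs_mul, abs_mul]
              exact mul_le_mul_of_nonneg_right
                (mul_le_mul_of_nonneg_right (abs_phiKer_le x w.1 w.2) (abs_nonneg _))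
                (abs_nonneg _)
          _ = _ := by
              rw [ENNReal.ofReal_mul (mul_nonneg (Phi_nonneg _ _ _) (abs_nonneg _)),
                ENNReal.ofReal_mul (Phi_nonneg _ _ _), mul_assoc]
      calc (∫⁻ w, ENNReal.ofReal ‖H w‖ ∂(μ.prod μ))
          ≤ ∫⁻ w, (F * G) w ∂(μ.prod μ) := lintegral_mono fun w => h1 w
        _ ≤ (∫⁻ w, F w ^ p ∂(μ.prod μ)) ^ (1/p) * (∫⁻ w, G w ^ q ∂(μ.prod μ)) ^ (1/q) :=
            ENNReal.lintegral_mul_le_Lp_mul_Lq _ ⟨by simpa [one_div] using hpq, hp0, hq0⟩ hFmeas hGmeas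
        _ ≤ (4 * ENNReal.ofReal A) ^ (1/p) * (ENNReal.ofReal (8*B)) ^ (1/q) := by
            refine mul_le_mul' ?_ ?_
            · refine ENNReal.rpow_le_rpow ?_ (by positivity)
              calc (∫⁻ w, F w ^ p ∂(μ.prod μ))
                  = ∫⁻ w, ENNReal.ofReal (Phi x w.1 w.2)
                      * ENNReal.ofReal (|f w.1| ^ p) ∂(μ.prod μ) :=
                    lintegral_congr fun w => hFp w
                _ ≤ _ := hP
            · refine ENNReal.rpow_le_rpow ?_ (by positivity)
              calc (∫⁻ w, G w ^ q ∂(μ.prod μ))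
                  = ∫⁻ w, ENNReal.ofReal (Phi x w.1 w.2)
                      * ENNReal.ofReal (|g w.2| ^ q) ∂(μ.prod μ) :=
                    lintegral_congr fun w => hGq w
                _ ≤ _ := hQ
        _ = ENNReal.ofReal ((4*A) ^ (1/p) * (8*B) ^ (1/q)) := by
            rw [show (4:ℝ≥0∞) * ENNReal.ofReal A = ENNReal.ofReal (4*A) by
                rw [ENNReal.ofReal_mul (by norm_num : (0:ℝ) ≤ 4)]; norm_num,
              ENNReal.ofReal_rpow_of_nonneg (by linarith) (by positivity),
              ENNReal.ofReal_rpow_of_nonneg (by linarith) (by positivity),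
              ← ENNReal.ofReal_mul (Real.rpow_nonneg (by linarith) _)]
    have hInt : Integrable H (μ.prod μ) :=
      ⟨hHsm, (hasFiniteIntegral_iff_norm H).2 (lt_of_le_of_lt key1 ENNReal.ofReal_lt_top)⟩
    have hnum : (1/4:ℝ) * ((4*A) ^ (1/p) * (8*B) ^ (1/q)) = C := by
      rw [hC, Real.mul_rpow (by norm_num) hA0, Real.mul_rpow (by norm_num) hB0]
      have h1p : (1:ℝ)/p = 1 - 1/q := by linarith
      have h4 : (4:ℝ) ^ ((1:ℝ)/p) = 4 / 4 ^ ((1:ℝ)/q) := by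
        rw [h1p, Real.rpow_sub (by norm_num), Real.rpow_one]
      have h8 : (8:ℝ) ^ ((1:ℝ)/q) = 4 ^ ((1:ℝ)/q) * 2 ^ ((1:ℝ)/q) := by
        rw [← Real.mul_rpow (by norm_num) (by norm_num)]; norm_num
      have hpos : (0:ℝ) < 4 ^ ((1:ℝ)/q) := Real.rpow_pos_of_pos (by norm_num) _
      rw [h4, h8]; field_simp
    have hgb : |gconv f g x| ≤ C := by
      have hsw : Integrable (Function.uncurry fun v u => phiKer x u v * f u * g v)
          (μ.prod μ) := by
        have := hInt.swap
        exact this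
      have heq : (∫ v in Set.Ioi (0:ℝ), ∫ u in Set.Ioi (0:ℝ), phiKer x u v * f u * g v)
          = ∫ z, H z ∂(μ.prod μ) := by
        have h := integral_integral_symm (f := fun v u => phiKer x u v * f u * g v)
          (μ := μ) (ν := μ) hsw
        exact h
      have hCC0 : (0:ℝ) ≤ (4*A) ^ (1/p) * (8*B) ^ (1/q) :=
        mul_nonneg (Real.rpow_nonneg (by linarith) _) (Real.rpow_nonneg (by linarith) _)
      have hb2 : |∫ z, H z ∂(μ.prod μ)| ≤ (4*A) ^ (1/p) * (8*B) ^ (1/q) := by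
        have hb := norm_integral_le_lintegral_norm (μ := μ.prod μ) H
        rw [Real.norm_eq_abs] at hb
        refine hb.trans ?_
        have := ENNReal.toReal_mono ENNReal.ofReal_ne_top key1
        rwa [ENNReal.toReal_ofReal hCC0] at this
      rw [gconv, heq, abs_mul, abs_of_nonneg (by norm_num : (0:ℝ) ≤ 1/4), ← hnum]
      exact mul_le_mul_of_nonneg_left hb2 (by norm_num)
    exact ⟨hInt, hgb⟩
  have hmeasρ : μ.prod μ = (volume : Measure (ℝ × ℝ)).restrict (Set.Ioi 0 ×ˢ Set.Ioi 0) := by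
    rw [hμ, Measure.prod_restrict, ← Measure.volume_eq_prod]
  refine ⟨fun x _ => ⟨?_, (key x).2⟩, ?_⟩
  · have h := (key x).1
    rw [hmeasρ] at h
    exact h
  rw [eLpNorm_exponent_top]
  refine eLpNormEssSup_le_of_ae_bound (C := C) ?_
  exact ae_of_all _ fun x => by simpa [Real.norm_eq_abs] using (key x).2
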